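/- For every finite rooted tree T, |n_{P_K}(T) - |K(T)|| ≤ 1, where P_K is the subtree property that the root of the subtree has at least two children and at least one of the subtrees rooted at its children is a line-graph (path) ending in a leaf, and K(T) is the set of exterior major vertices of T. -/

import Mathlib

open SimpleGraph

variable {V : Type*} [Fintype V]

/-- `w` is a child of `v` in the tree `G` rooted at `r`. -/
def IsChild (G : SimpleGraph V) (r v w : V) : Prop :=
  G.Adj v w ∧ G.dist r w = G.dist r v + 1

/-- `w` belongs to the subtree `T_v` of the tree `G` rooted at `r`
(i.e. `v` lies on the path from the root to `w`). -/
def InSubtree (G : SimpleGraph V) (r v w : V) : Prop :=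
  G.dist r w = G.dist r v + G.dist v w

/-- The subtree rooted at `v` is a line-graph: every vertex of it has at most one child. -/
def SubtreeIsLine (G : SimpleGraph V) (r v : V) : Prop :=
  ∀ u, InSubtree G r v u → Nat.card {w : V // IsChild G r u w} ≤ 1

/-- The subtree property `P_K` at vertex `v`: `v` has at least two children and at least one
child whose subtree is a line-graph. -/
def HasPK (G : SimpleGraph V) (r v : V) : Prop :=
  2 ≤ Nat.card {w : V // IsChild G r v w} ∧ ∃ w, IsChild G r v w ∧ SubtreeIsLine G r w

/-- A leaf: a vertex of degree 1. -/
def IsLeafVx (G : SimpleGraph V) [DecidableRel G.Adj] (v : V) : Prop :=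
  G.degree v = 1

/-- An exterior major vertex: a vertex of degree at least 3 having a path to a leaf all of
whose internal vertices have degree 2. -/
def IsExtMajor (G : SimpleGraph V) [DecidableRel G.Adj] (v : V) : Prop :=
  3 ≤ G.degree v ∧ ∃ (l : V) (p : G.Walk v l), IsLeafVx G l ∧ p.IsPath ∧
    ∀ u ∈ p.support, u ≠ v → u ≠ l → G.degree u = 2

section TreeAux

open SimpleGraph Walk Finset

variable {G : SimpleGraph V} {r u v w x c : V}

/-- In a tree, every path realizes the distance. -/
lemma tree_path_length (hT : G.IsTree) {u v : V} {p : G.Walk u v} (hp : p.IsPath) :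
    p.length = G.dist u v := by
  classical
  obtain ⟨q, hq⟩ := (hT.isConnected u v).exists_walk_length_eq_dist
  have h1 : p = q.bypass := (hT.existsUnique_path u v).unique hp q.bypass_isPath
  refine le_antisymm ?_ (SimpleGraph.dist_le p)
  calc p.length = q.bypass.length := by rw [h1]
    _ ≤ q.length := q.length_bypass_le
    _ = G.dist u v := hq

lemma dist_lt_card (hT : G.IsTree) (u v : V) : G.dist u v < Fintype.card V := by
  classical
  obtain ⟨p, hp⟩ := (hT.existsUnique_path u v).exists
  rw [← tree_path_length hT hp]
  exact hp.length_lt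

/-- Each neighbour is a child or the parent. -/
lemma adj_dist_cases (hT : G.IsTree) (r : V) (h : G.Adj v w) :
    G.dist r w = G.dist r v + 1 ∨ G.dist r v = G.dist r w + 1 := by
  classical
  obtain ⟨p, hp⟩ := (hT.existsUnique_path r v).exists
  by_cases hw : w ∈ p.support
  · right
    have h1 : (p.takeUntil w hw).length = G.dist r w :=
      tree_path_length hT (hp.takeUntil hw)
    have h2 : (p.dropUntil w hw).length = G.dist w v :=
      tree_path_length hT (hp.dropUntil hw)
    have h3 : (p.takeUntil w hw).length + (p.dropUntil w hw).length = p.length := by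
      rw [← length_append, take_spec]
    have h4 : p.length = G.dist r v := tree_path_length hT hp
    have h5 : G.dist w v = 1 := dist_eq_one_iff_adj.2 h.symm
    omega
  · left
    have hq : (p.concat h).IsPath := by
      rw [← isPath_reverse_iff, reverse_concat]
      exact (hp.reverse).cons (by simpa [support_reverse] using hw)
    have h1 := tree_path_length hT hq
    rw [length_concat, tree_path_length hT hp] at h1
    omega

lemma IsChild.ne_root (hT : G.IsTree) (h : IsChild G r u c) : c ≠ r := by
  intro hc
  subst hc
  have := h.2
  simp [SimpleGraph.dist_self] at this

lemma InSubtree.refl (G : SimpleGraph V) (r v : V) : InSubtree G r v v := by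
  simp [InSubtree, SimpleGraph.dist_self]

lemma IsChild.inSubtree (h : IsChild G r u c) : InSubtree G r u c := by
  have : G.dist u c = 1 := dist_eq_one_iff_adj.2 h.1
  simp [InSubtree, this, h.2]

lemma InSubtree.trans (hT : G.IsTree) (h1 : InSubtree G r u v) (h2 : InSubtree G r v w) :
    InSubtree G r u w := by
  have ht1 : G.dist u w ≤ G.dist u v + G.dist v w := hT.isConnected.dist_triangle
  have ht2 : G.dist r w ≤ G.dist r u + G.dist u w := hT.isConnected.dist_triangle
  unfold InSubtree at *
  omega

lemma InSubtree.dist_le (h : InSubtree G r u v) : G.dist r u ≤ G.dist r v := by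
  unfold InSubtree at h; omega

lemma eq_of_inSubtree_dist (hT : G.IsTree) (h : InSubtree G r u v)
    (hd : G.dist r v ≤ G.dist r u) : u = v := by
  unfold InSubtree at h
  have : G.dist u v = 0 := by omega
  exact (hT.isConnected.dist_eq_zero_iff).1 this

/-- Uniqueness of the parent. -/
lemma parent_unique (hT : G.IsTree) (hw : G.Adj v w) (hw' : G.Adj v w')
    (h1 : G.dist r v = G.dist r w + 1) (h2 : G.dist r v = G.dist r w' + 1) :
    w = w' := by
  classical
  obtain ⟨q, hq⟩ := (hT.existsUnique_path r w).exists
  obtain ⟨q', hq'⟩ := (hT.existsUnique_path r w').exists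
  have hvq : v ∉ q.support := by
    intro hv
    have := tree_path_length hT (hq.takeUntil hv)
    have hle := length_takeUntil_le q hv
    rw [tree_path_length hT hq] at hle
    omega
  have hvq' : v ∉ q'.support := by
    intro hv
    have := tree_path_length hT (hq'.takeUntil hv)
    have hle := length_takeUntil_le q' hv
    rw [tree_path_length hT hq'] at hle
    omega
  have hp1 : (q.concat hw.symm).IsPath := by
    rw [← isPath_reverse_iff, reverse_concat]
    exact (hq.reverse).cons (by simpa [support_reverse] using hvq)
  have hp2 : (q'.concat hw'.symm).IsPath := by
    rw [← isPath_reverse_iff, reverse_concat]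
    exact (hq'.reverse).cons (by simpa [support_reverse] using hvq')
  have heq : q.concat hw.symm = q'.concat hw'.symm :=
    (hT.existsUnique_path r v).unique hp1 hp2
  have hs : q.support ++ [v] = q'.support ++ [v] := by
    have := congrArg Walk.support heq
    rwa [support_concat, support_concat] at this
  have hsup : q.support = q'.support := by
    have h2 := congrArg List.reverse hs
    simp only [List.reverse_append, List.reverse_cons, List.reverse_nil, List.nil_append,
      List.singleton_append, List.cons.injEq] at h2
    exact List.reverse_injective h2.2
  have e1 : q.support.reverse = w :: q.reverse.support.tail := by
    rw [← support_reverse]; exact q.reverse.support_eq_cons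
  have e2 : q'.support.reverse = w' :: q'.reverse.support.tail := by
    rw [← support_reverse]; exact q'.reverse.support_eq_cons
  have h3 := congrArg List.reverse hsup
  rw [e1, e2] at h3
  injection h3

lemma exists_parent (hT : G.IsTree) (hv : v ≠ r) : ∃ w, IsChild G r w v := by
  classical
  obtain ⟨p, hp⟩ := (hT.existsUnique_path r v).exists
  have hlen : p.length = G.dist r v := tree_path_length hT hp
  obtain ⟨w, h, q, hq⟩ := exists_eq_cons_of_ne hv p.reverse
  have hqpath : q.IsPath := by
    have := hp.reverse
    rw [hq] at this
    exact this.of_cons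
  have hql : q.reverse.length = G.dist r w := tree_path_length hT hqpath.reverse
  have hpl : p.reverse.length = q.length + 1 := by rw [hq]; simp
  simp only [length_reverse] at hql hpl
  exact ⟨w, h.symm, by omega⟩

lemma adj_iff_child (hT : G.IsTree) (r : V) :
    G.Adj v w ↔ IsChild G r v w ∨ IsChild G r w v := by
  constructor
  · intro h
    rcases adj_dist_cases hT r h with hc | hc
    · exact Or.inl ⟨h, hc⟩
    · exact Or.inr ⟨h.symm, hc⟩
  · rintro (h | h)
    · exact h.1
    · exact h.1.symm

lemma not_isChild_root (h : IsChild G r w r) : False := by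
  have := h.2
  simp [SimpleGraph.dist_self] at this

lemma nchild_eq_ncard (G : SimpleGraph V) (r v : V) :
    Nat.card {w : V // IsChild G r v w} = {w : V | IsChild G r v w}.ncard := by
  exact Nat.card_coe_set_eq _

lemma degree_eq_ncard_union (hT : G.IsTree) [DecidableRel G.Adj] (v : V) :
    G.degree v = ({w : V | IsChild G r v w} ∪ {w : V | IsChild G r w v}).ncard := by
  have hset : (G.neighborSet v) = {w | IsChild G r v w} ∪ {w | IsChild G r w v} := by
    ext w
    simpa [mem_neighborSet] using (adj_iff_child (v := v) (w := w) hT r)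
  rw [← hset, ← Nat.card_coe_set_eq, Nat.card_eq_fintype_card,
    card_neighborSet_eq_degree]

lemma ncard_children_parents (hT : G.IsTree) [DecidableRel G.Adj] (v : V) :
    G.degree v = {w : V | IsChild G r v w}.ncard + {w : V | IsChild G r w v}.ncard := by
  rw [degree_eq_ncard_union hT v, Set.ncard_union_eq ?_ (Set.toFinite _) (Set.toFinite _)]
  rw [Set.disjoint_left]
  rintro a ⟨_, h1⟩ ⟨_, h2⟩
  omega

lemma degree_eq_nchild_add_one (hT : G.IsTree) [DecidableRel G.Adj] (hv : v ≠ r) :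
    G.degree v = Nat.card {w : V // IsChild G r v w} + 1 := by
  obtain ⟨w0, hw0⟩ := exists_parent hT hv
  have hP : {w : V | IsChild G r w v} = {w0} := by
    ext w
    simp only [Set.mem_setOf_eq, Set.mem_singleton_iff]
    constructor
    · intro h
      exact parent_unique hT h.1.symm hw0.1.symm h.2 hw0.2
    · rintro rfl; exact hw0
  rw [ncard_children_parents hT v, hP, Set.ncard_singleton, nchild_eq_ncard]

lemma degree_root_eq_nchild (hT : G.IsTree) [DecidableRel G.Adj] :
    G.degree r = Nat.card {w : V // IsChild G r r w} := by
  have hP : {w : V | IsChild G r w r} = (∅ : Set V) := by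
    ext w
    simp only [Set.mem_setOf_eq, Set.mem_empty_iff_false, iff_false]
    exact not_isChild_root
  rw [ncard_children_parents hT r, hP, Set.ncard_empty, nchild_eq_ncard, add_zero]

lemma nchild_pos (h : IsChild G r v c) : 1 ≤ Nat.card {w : V // IsChild G r v w} := by
  have : Nonempty {w : V // IsChild G r v w} := ⟨⟨c, h⟩⟩
  exact Nat.card_pos

lemma two_le_nchild (h : IsChild G r v c) (h' : IsChild G r v c') (hne : c ≠ c') :
    2 ≤ Nat.card {w : V // IsChild G r v w} := by
  have : Nontrivial {w : V // IsChild G r v w} :=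
    ⟨⟨⟨c, h⟩, ⟨c', h'⟩, by simp [Subtype.ext_iff, hne]⟩⟩
  exact Finite.one_lt_card_iff_nontrivial.2 this

lemma child_eq_of_le_one (hcard : Nat.card {w : V // IsChild G r v w} ≤ 1)
    (h : IsChild G r v c) (h' : IsChild G r v c') : c = c' := by
  by_contra hne
  have := two_le_nchild h h' hne
  omega

lemma child_eq_or_of_card_two (hcard : Nat.card {w : V // IsChild G r v w} = 2)
    (hb : IsChild G r v u) (hx : IsChild G r v x) (hne : u ≠ x)
    (hc : IsChild G r v c) : c = u ∨ c = x := by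
  classical
  by_contra hcc
  push_neg at hcc
  have hsub : ({u, x, c} : Finset V) ⊆ Finset.univ.filter (fun w => IsChild G r v w) := by
    intro a ha
    simp only [Finset.mem_insert, Finset.mem_singleton] at ha
    rcases ha with rfl | rfl | rfl <;> simp [hb, hx, hc]
  have h3 : ({u, x, c} : Finset V).card = 3 := by
    rw [Finset.card_insert_of_notMem (by simp [hne, Ne.symm hcc.1]),
      Finset.card_insert_of_notMem (by simp [Ne.symm hcc.2])]
    simp
  have hle := Finset.card_le_card hsub
  rw [h3] at hle
  rw [Nat.card_eq_fintype_card, Fintype.card_subtype] at hcard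
  omega

lemma exists_child_inSubtree (hT : G.IsTree) (hx : InSubtree G r u x) (hne : x ≠ u) :
    ∃ c, IsChild G r u c ∧ InSubtree G r c x := by
  classical
  obtain ⟨p, hp⟩ := (hT.existsUnique_path u x).exists
  obtain ⟨w, h, q, hq⟩ := exists_eq_cons_of_ne (Ne.symm hne) p
  have hplen : p.length = G.dist u x := tree_path_length hT hp
  have hqpath : q.IsPath := by rw [hq] at hp; exact hp.of_cons
  have hqlen : q.length = G.dist w x := tree_path_length hT hqpath
  have hlen : p.length = q.length + 1 := by rw [hq]; simp
  have hpos : 0 < G.dist u x := hT.isConnected.pos_dist_of_ne (Ne.symm hne)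
  have htri : G.dist r x ≤ G.dist r w + G.dist w x := hT.isConnected.dist_triangle
  unfold InSubtree at hx ⊢
  rcases adj_dist_cases hT r h with hc | hc
  · exact ⟨w, ⟨h, hc⟩, by omega⟩
  · omega

lemma inSubtree_iff_mem_support (hT : G.IsTree) {a b u : V} {p : G.Walk a b}
    (hp : p.IsPath) : InSubtree G a u b ↔ u ∈ p.support := by
  classical
  constructor
  · intro h
    obtain ⟨p1, hp1⟩ := (hT.existsUnique_path a u).exists
    obtain ⟨p2, hp2⟩ := (hT.existsUnique_path u b).exists
    have hl1 := tree_path_length hT hp1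
    have hl2 := tree_path_length hT hp2
    have hW : (p1.append p2).length = G.dist a b := by
      rw [length_append]; unfold InSubtree at h; omega
    have hWp : (p1.append p2).IsPath := Walk.isPath_of_length_eq_dist _ hW
    have heq : p1.append p2 = p := (hT.existsUnique_path a b).unique hWp hp
    rw [← heq]
    exact (mem_support_append_iff _ _).2 (Or.inl p1.end_mem_support)
  · intro h
    have h1 := tree_path_length hT (hp.takeUntil h)
    have h2 := tree_path_length hT (hp.dropUntil h)
    have h3 : (p.takeUntil u h).length + (p.dropUntil u h).length = p.length := by
      rw [← length_append, take_spec]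
    have h4 := tree_path_length hT hp
    unfold InSubtree
    omega

lemma inSubtree_parent_step (hT : G.IsTree) (hpar : IsChild G r w v) (u : V) :
    InSubtree G r u v ↔ u = v ∨ InSubtree G r u w := by
  classical
  obtain ⟨q, hq⟩ := (hT.existsUnique_path r w).exists
  have hvq : v ∉ q.support := by
    intro hv
    have h1 := ((inSubtree_iff_mem_support hT hq).2 hv).dist_le
    have h2 := hpar.2
    omega
  have hP : (q.concat hpar.1).IsPath := by
    rw [← isPath_reverse_iff, reverse_concat]
    exact (hq.reverse).cons (by simpa [support_reverse] using hvq)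
  rw [inSubtree_iff_mem_support hT hP, inSubtree_iff_mem_support hT hq,
    support_concat, List.mem_append, List.mem_singleton]
  tauto

lemma inSubtree_of_le_dist (hT : G.IsTree) {a : V} (h1 : InSubtree G r u v)
    (h2 : InSubtree G r a v) (hd : G.dist r u ≤ G.dist r a) : InSubtree G r u a := by
  classical
  obtain ⟨p, hp⟩ := (hT.existsUnique_path r v).exists
  have hu := (inSubtree_iff_mem_support hT hp).1 h1
  have ha := (inSubtree_iff_mem_support hT hp).1 h2
  rw [← take_spec p ha] at hu
  rcases (mem_support_append_iff _ _).1 hu with h | h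
  · exact (inSubtree_iff_mem_support hT (hp.takeUntil ha)).2 h
  · have h5 := (inSubtree_iff_mem_support hT (hp.dropUntil ha)).2 h
    have hau : u = a := by
      refine (eq_of_inSubtree_dist (r := r) hT ?_ ?_).symm
      · unfold InSubtree at *; omega
      · exact hd
    rw [hau]
    exact InSubtree.refl G r a

lemma exists_path_to_leaf (hT : G.IsTree) [DecidableRel G.Adj] :
    ∀ n (u : V), Fintype.card V - G.dist r u ≤ n → u ≠ r →
    (∀ x, InSubtree G r u x → Nat.card {w : V // IsChild G r x w} ≤ 1) →
    ∃ (l : V) (p : G.Walk u l), p.IsPath ∧ IsLeafVx G l ∧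
      (∀ x ∈ p.support, InSubtree G r u x) ∧ (∀ x ∈ p.support, x ≠ l → G.degree x = 2) := by
  intro n
  induction n with
  | zero =>
    intro u hn _ _
    exfalso
    have := dist_lt_card hT r u
    omega
  | succ n ih =>
    intro u hn hu hline
    by_cases hc : ∃ c, IsChild G r u c
    · obtain ⟨c, hc⟩ := hc
      have hcr : c ≠ r := hc.ne_root hT
      have hdist : G.dist r c = G.dist r u + 1 := hc.2
      have hlt := dist_lt_card hT r c
      have hline' : ∀ x, InSubtree G r c x → Nat.card {w : V // IsChild G r x w} ≤ 1 :=
        fun x hx => hline x ((hc.inSubtree).trans hT hx)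
      obtain ⟨l, q, hq, hl, hsub, hdeg⟩ := ih c (by omega) hcr hline'
      have husupp : u ∉ q.support := by
        intro hu'
        have := (hsub u hu').dist_le
        omega
      refine ⟨l, Walk.cons hc.1 q, hq.cons husupp, hl, ?_, ?_⟩
      · intro x hx
        rw [support_cons, List.mem_cons] at hx
        rcases hx with rfl | hx
        · exact InSubtree.refl G r x
        · exact (hc.inSubtree).trans hT (hsub x hx)
      · intro x hx hxl
        rw [support_cons, List.mem_cons] at hx
        rcases hx with rfl | hx
        · have h1 := degree_eq_nchild_add_one (r := r) (v := x) hT hu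
          have h2 := nchild_pos hc
          have h3 := hline x (InSubtree.refl G r x)
          omega
        · exact hdeg x hx hxl
    · push_neg at hc
      have h1 := degree_eq_nchild_add_one (r := r) (v := u) hT hu
      have h2 : Nat.card {w : V // IsChild G r u w} = 0 := by
        have : IsEmpty {w : V // IsChild G r u w} := ⟨fun w => hc w w.2⟩
        exact Nat.card_of_isEmpty
      refine ⟨u, Walk.nil, IsPath.nil, ?_, ?_, ?_⟩
      · unfold IsLeafVx; omega
      · intro x hx
        simp only [support_nil, List.mem_singleton] at hx
        subst hx
        exact InSubtree.refl G r x
      · intro x hx hxl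
        simp only [support_nil, List.mem_singleton] at hx
        exact absurd hx hxl

lemma line_of_leaf_path (hT : G.IsTree) [DecidableRel G.Adj] :
    ∀ {u l : V} (q : G.Walk u l), q.IsPath → u ≠ r →
    (∃ v', IsChild G r v' u ∧ v' ∉ q.support) → IsLeafVx G l →
    (∀ x ∈ q.support, x ≠ l → G.degree x = 2) → SubtreeIsLine G r u := by
  intro u l q
  induction q with
  | @nil a =>
    intro _ hu hpar hl hdeg
    have h1 := degree_eq_nchild_add_one (r := r) hT hu
    have h0 : Nat.card {w : V // IsChild G r a w} = 0 := by
      unfold IsLeafVx at hl; omega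
    intro x hx
    by_cases hxu : x = a
    · subst hxu; omega
    · exfalso
      obtain ⟨c, hc, _⟩ := exists_child_inSubtree hT hx hxu
      have := nchild_pos hc
      omega
  | @cons a b c h q' ih =>
    intro hq hu hpar hl hdeg
    obtain ⟨v', hv', hv's⟩ := hpar
    have hq' : q'.IsPath := hq.of_cons
    have hnodup : a ∉ q'.support := by
      rw [cons_isPath_iff] at hq; exact hq.2
    have hal : a ≠ c := fun hac => hnodup (hac ▸ q'.end_mem_support)
    have hdega : G.degree a = 2 := hdeg a (start_mem_support _) hal
    have hbs : b ∈ Walk.support (Walk.cons h q') := by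
      rw [support_cons]
      exact List.mem_cons_of_mem _ q'.start_mem_support
    have hb : IsChild G r a b := by
      rcases (adj_iff_child hT r).1 h with hcb | hpb
      · exact hcb
      · exfalso
        have hbv : b = v' := parent_unique hT h hv'.1.symm hpb.2 hv'.2
        exact hv's (hbv ▸ hbs)
    have hbr : b ≠ r := hb.ne_root hT
    have hnca : Nat.card {w : V // IsChild G r a w} = 1 := by
      have h1 := degree_eq_nchild_add_one (r := r) hT hu
      omega
    have hlineb : SubtreeIsLine G r b := by
      refine ih hq' hbr ⟨a, hb, hnodup⟩ hl ?_
      intro x hx hxl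
      exact hdeg x (by rw [support_cons]; exact List.mem_cons_of_mem _ hx) hxl
    intro x hx
    by_cases hxa : x = a
    · subst hxa; omega
    · obtain ⟨cc, hcc, hccx⟩ := exists_child_inSubtree hT hx hxa
      have hcb : cc = b := child_eq_of_le_one (le_of_eq hnca) hcc hb
      exact hlineb x (hcb ▸ hccx)

lemma extMajor_of_hasPK (hT : G.IsTree) [DecidableRel G.Adj] {v : V}
    (h : HasPK G r v) (hdeg : 3 ≤ G.degree v) : IsExtMajor G v := by
  obtain ⟨hn, w, hw, hline⟩ := h
  have hwr : w ≠ r := hw.ne_root hT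
  obtain ⟨l, q, hq, hl, hsub, hdq⟩ :=
    exists_path_to_leaf hT (Fintype.card V) w (by omega) hwr (fun x hx => hline x hx)
  have hvq : v ∉ q.support := by
    intro hv
    have h1 := (hsub v hv).dist_le
    have h2 := hw.2
    omega
  refine ⟨hdeg, l, Walk.cons hw.1 q, hl, hq.cons hvq, ?_⟩
  intro x hx hxv hxl
  rw [support_cons, List.mem_cons] at hx
  rcases hx with rfl | hx
  · exact absurd rfl hxv
  · exact hdq x hx hxl

lemma extMajor_of_hasPK_ne_root (hT : G.IsTree) [DecidableRel G.Adj] {v : V}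
    (h : HasPK G r v) (hv : v ≠ r) : IsExtMajor G v := by
  refine extMajor_of_hasPK hT h ?_
  have h1 := degree_eq_nchild_add_one (r := r) hT hv
  have h2 := h.1
  omega

lemma inSubtree_root (G : SimpleGraph V) (r v : V) : InSubtree G r r v := by
  unfold InSubtree
  simp [SimpleGraph.dist_self]

lemma up_lemma (hT : G.IsTree) [DecidableRel G.Adj] :
    ∀ {a l : V} (q : G.Walk a l) (b : V), q.IsPath → IsLeafVx G l →
    (∀ x ∈ q.support, x ≠ l → G.degree x = 2) → IsChild G r a b → b ∉ q.support →
    (∀ u, InSubtree G r u a → u ≠ r → Nat.card {w : V // IsChild G r u w} = 1) ∧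
    (∀ c, IsChild G r r c → InSubtree G r c a ∨ c = b ∨ SubtreeIsLine G r c) := by
  intro a l q
  induction q with
  | @nil a =>
    intro b _ hl _ hb _
    by_cases har : a = r
    · subst har
      constructor
      · intro u hu hur
        exfalso
        unfold InSubtree at hu
        have h0 : G.dist a a = 0 := SimpleGraph.dist_self
        exact hur ((hT.isConnected.dist_eq_zero_iff).1 (by omega))
      · intro c hc
        right; left
        have h1 := degree_root_eq_nchild (r := a) hT
        unfold IsLeafVx at hl
        exact child_eq_of_le_one (by omega) hc hb
    · exfalso
      have h1 := degree_eq_nchild_add_one (r := r) hT har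
      have h2 := nchild_pos hb
      unfold IsLeafVx at hl
      omega
  | @cons a b2 c h q' ih =>
    intro b hq hl hdeg hb hbs
    have hq' := hq.of_cons
    have hnodup : a ∉ q'.support := by rw [cons_isPath_iff] at hq; exact hq.2
    have hac : a ≠ c := fun h' => hnodup (h' ▸ q'.end_mem_support)
    have hdega : G.degree a = 2 := hdeg a (start_mem_support _) hac
    have hbne : b ≠ b2 := by
      intro e
      exact hbs (by rw [support_cons]; exact List.mem_cons_of_mem _ (e ▸ q'.start_mem_support))
    have hintq' : ∀ x ∈ q'.support, x ≠ c → G.degree x = 2 := by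
      intro x hx hxl
      exact hdeg x (by rw [support_cons]; exact List.mem_cons_of_mem _ hx) hxl
    rcases (adj_iff_child hT r).1 h with hcb | hpb
    · -- second vertex is a child : the turning point, a = r
      have har : a = r := by
        by_contra har
        have h1 := degree_eq_nchild_add_one (r := r) hT har
        have h2 := two_le_nchild hb hcb hbne
        omega
      subst har
      have hlineb2 : SubtreeIsLine G a b2 :=
        line_of_leaf_path hT q' hq' (hcb.ne_root hT) ⟨a, hcb, hnodup⟩ hl hintq'
      have hnr : Nat.card {w : V // IsChild G a a w} = 2 := by
        have h1 := degree_root_eq_nchild (r := a) hT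
        omega
      constructor
      · intro u hu hur
        exfalso
        unfold InSubtree at hu
        have h0 : G.dist a a = 0 := SimpleGraph.dist_self
        exact hur ((hT.isConnected.dist_eq_zero_iff).1 (by omega))
      · intro cc hcc
        rcases child_eq_or_of_card_two hnr hb hcb hbne hcc with rfl | rfl
        · right; left; rfl
        · right; right; exact hlineb2
    · -- second vertex is the parent : keep climbing
      have har : a ≠ r := by
        intro h'
        exact not_isChild_root (h' ▸ hpb)
      have hnca : Nat.card {w : V // IsChild G r a w} = 1 := by
        have h1 := degree_eq_nchild_add_one (r := r) hT har
        have h2 := nchild_pos hb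
        omega
      obtain ⟨P1, P2⟩ := ih a hq' hl hintq' hpb hnodup
      constructor
      · intro u hu hur
        rcases (inSubtree_parent_step hT hpb u).1 hu with rfl | hu'
        · exact hnca
        · exact P1 u hu' hur
      · intro cc hcc
        rcases P2 cc hcc with h' | h' | h'
        · exact Or.inl (h'.trans hT hpb.inSubtree)
        · left; rw [h']; exact InSubtree.refl G r a
        · right; right; exact h'

lemma master (hT : G.IsTree) [DecidableRel G.Adj] {v : V}
    (hE : IsExtMajor G v) (hS : ¬HasPK G r v) :
    v ≠ r ∧ 2 ≤ Nat.card {w : V // IsChild G r v w} ∧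
    (∀ u, InSubtree G r u v → u ≠ v → u ≠ r → Nat.card {w : V // IsChild G r u w} = 1) ∧
    (∀ c, IsChild G r r c → ¬InSubtree G r c v → SubtreeIsLine G r c) := by
  obtain ⟨hdeg, l, p, hl, hp, hint⟩ := hE
  have hvl : v ≠ l := by
    intro h'
    unfold IsLeafVx at hl
    rw [h'] at hdeg
    omega
  obtain ⟨b2, h, q, hq⟩ := exists_eq_cons_of_ne hvl p
  have hqpath : q.IsPath := by rw [hq] at hp; exact hp.of_cons
  have hnodup : v ∉ q.support := by rw [hq, cons_isPath_iff] at hp; exact hp.2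
  have hintq : ∀ x ∈ q.support, x ≠ l → G.degree x = 2 := by
    intro x hx hxl
    refine hint x ?_ ?_ hxl
    · rw [hq, support_cons]; exact List.mem_cons_of_mem _ hx
    · intro h'; exact hnodup (h' ▸ hx)
  have hvr : v ≠ r := by
    intro h'
    subst h'
    apply hS
    have hcb : IsChild G v v b2 := by
      rcases (adj_iff_child hT v).1 h with h1 | h1
      · exact h1
      · exact absurd h1 not_isChild_root
    refine ⟨?_, b2, hcb, ?_⟩
    · have h1 := degree_root_eq_nchild (r := v) hT
      omega
    · exact line_of_leaf_path hT q hqpath (hcb.ne_root hT) ⟨v, hcb, hnodup⟩ hl hintq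
  have hn2 : 2 ≤ Nat.card {w : V // IsChild G r v w} := by
    have h1 := degree_eq_nchild_add_one (r := r) hT hvr
    omega
  have hpb : IsChild G r b2 v := by
    rcases (adj_iff_child hT r).1 h with h1 | h1
    · exfalso
      exact hS ⟨hn2, b2, h1,
        line_of_leaf_path hT q hqpath (h1.ne_root hT) ⟨v, h1, hnodup⟩ hl hintq⟩
    · exact h1
  obtain ⟨P1, P2⟩ := up_lemma hT q v hqpath hl hintq hpb hnodup
  refine ⟨hvr, hn2, ?_, ?_⟩
  · intro u hu huv hur
    rcases (inSubtree_parent_step hT hpb u).1 hu with rfl | hu'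
    · exact absurd rfl huv
    · exact P1 u hu' hur
  · intro c hc hcv
    rcases P2 c hc with h' | h' | h'
    · exact absurd (h'.trans hT hpb.inSubtree) hcv
    · exfalso
      apply hcv
      rw [h']
      exact InSubtree.refl G r v
    · exact h'

lemma descend (hT : G.IsTree) {v v' : V}
    (hch : ∀ u, InSubtree G r u v → u ≠ v → u ≠ r → Nat.card {w : V // IsChild G r u w} = 1)
    (hd : G.dist r v ≤ G.dist r v') :
    ∀ n (u : V), u ≠ r → InSubtree G r u v → InSubtree G r u v' →
      G.dist r v - G.dist r u ≤ n → InSubtree G r v v' := by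
  intro n
  induction n with
  | zero =>
    intro u hur h1 h2 hn
    have huv : u = v := eq_of_inSubtree_dist hT h1 (by omega)
    exact huv ▸ h2
  | succ n ih =>
    intro u hur h1 h2 hn
    by_cases huv : u = v
    · exact huv ▸ h2
    · have hn1 : Nat.card {w : V // IsChild G r u w} = 1 := hch u h1 huv hur
      have hpos : 0 < G.dist u v := hT.isConnected.pos_dist_of_ne huv
      have hne' : v' ≠ u := by
        intro h'
        subst h'
        unfold InSubtree at h1
        omega
      obtain ⟨c, hc, hcv⟩ := exists_child_inSubtree hT h1 (Ne.symm huv)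
      obtain ⟨c', hc', hcv'⟩ := exists_child_inSubtree hT h2 hne'
      have hcc : c' = c := child_eq_of_le_one (le_of_eq hn1) hc' hc
      have hdc := hc.2
      have hd1 : G.dist r v = G.dist r u + G.dist u v := h1
      exact ih c (hc.ne_root hT) hcv (hcc ▸ hcv') (by omega)

lemma special_eq (hT : G.IsTree) {v v' : V}
    (h1 : v ≠ r) (h2 : 2 ≤ Nat.card {w : V // IsChild G r v w})
    (h3 : ∀ u, InSubtree G r u v → u ≠ v → u ≠ r → Nat.card {w : V // IsChild G r u w} = 1)
    (h4 : ∀ c, IsChild G r r c → ¬InSubtree G r c v → SubtreeIsLine G r c)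
    (h1' : v' ≠ r) (h2' : 2 ≤ Nat.card {w : V // IsChild G r v' w})
    (h3' : ∀ u, InSubtree G r u v' → u ≠ v' → u ≠ r → Nat.card {w : V // IsChild G r u w} = 1)
    (h4' : ∀ c, IsChild G r r c → ¬InSubtree G r c v' → SubtreeIsLine G r c)
    (hd : G.dist r v ≤ G.dist r v') : v = v' := by
  obtain ⟨c, hc, hcv⟩ := exists_child_inSubtree hT (inSubtree_root G r v) h1
  obtain ⟨c', hc', hcv'⟩ := exists_child_inSubtree hT (inSubtree_root G r v') h1'
  have hcc : c = c' := by
    by_contra hne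
    have hnc : ¬InSubtree G r c' v := by
      intro hmem
      apply hne
      have hle : G.dist r c ≤ G.dist r c' := by rw [hc.2, hc'.2]
      have := inSubtree_of_le_dist hT hmem hcv (by rw [hc.2, hc'.2])
      exact (eq_of_inSubtree_dist hT this (by rw [hc.2, hc'.2])).symm
    have hline := h4 c' hc' hnc
    have := hline v' hcv'
    omega
  have hanc : InSubtree G r v v' := by
    refine descend hT h3 hd (G.dist r v) c (hc.ne_root hT) hcv (hcc ▸ hcv') ?_
    have := hc.2
    omega
  by_contra hne
  have := h3' v hanc hne h1
  omega

end TreeAux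

/-- For every finite rooted tree `T`, `|n_{P_K}(T) - |K(T)|| ≤ 1`, where `n_{P_K}(T)` is the
number of vertices whose subtree has property `P_K` and `K(T)` is the set of exterior major
vertices of `T`. -/
theorem abs_countPK_sub_extMajor_le_one (G : SimpleGraph V) [DecidableRel G.Adj]
    (r : V) (hT : G.IsTree) :
    ((Nat.card {v : V // HasPK G r v} : ℤ) - Nat.card {v : V // IsExtMajor G v}).natAbs ≤ 1 := by
  classical
  set S : Set V := {v | HasPK G r v} with hSdef
  set E : Set V := {v | IsExtMajor G v} with hEdef
  have hS : Nat.card {v : V // HasPK G r v} = S.ncard := Nat.card_coe_set_eq _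
  have hE : Nat.card {v : V // IsExtMajor G v} = E.ncard := Nat.card_coe_set_eq _
  have hSE : (S \ E).ncard ≤ 1 := by
    have hsub : S \ E ⊆ {r} := by
      rintro v ⟨hv, hnv⟩
      simp only [Set.mem_singleton_iff]
      by_contra hvr
      exact hnv (extMajor_of_hasPK_ne_root hT hv hvr)
    calc (S \ E).ncard ≤ ({r} : Set V).ncard := Set.ncard_le_ncard hsub (Set.toFinite _)
      _ = 1 := Set.ncard_singleton r
  have hES : (E \ S).ncard ≤ 1 := by
    rcases Set.eq_empty_or_nonempty (E \ S) with h | ⟨v₀, hv₀⟩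
    · simp [h]
    · have hM₀ := master hT hv₀.1 hv₀.2
      have hsub : E \ S ⊆ {v₀} := by
        rintro v ⟨hv, hnv⟩
        simp only [Set.mem_singleton_iff]
        have hM := master hT hv hnv
        rcases le_total (G.dist r v) (G.dist r v₀) with hd | hd
        · exact special_eq hT hM.1 hM.2.1 hM.2.2.1 hM.2.2.2
            hM₀.1 hM₀.2.1 hM₀.2.2.1 hM₀.2.2.2 hd
        · exact (special_eq hT hM₀.1 hM₀.2.1 hM₀.2.2.1 hM₀.2.2.2
            hM.1 hM.2.1 hM.2.2.1 hM.2.2.2 hd).symm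
      calc (E \ S).ncard ≤ ({v₀} : Set V).ncard := Set.ncard_le_ncard hsub (Set.toFinite _)
        _ = 1 := Set.ncard_singleton v₀
  have hdS : (S \ E).ncard + (S ∩ E).ncard = S.ncard := by
    rw [← Set.ncard_union_eq (Set.disjoint_left.2 fun a ha hb => ha.2 hb.2)
      (Set.toFinite _) (Set.toFinite _), Set.diff_union_inter]
  have hdE : (E \ S).ncard + (S ∩ E).ncard = E.ncard := by
    rw [← Set.ncard_union_eq (Set.disjoint_left.2 fun a ha hb => ha.2 hb.1)
      (Set.toFinite _) (Set.toFinite _), Set.inter_comm, Set.diff_union_inter]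
  rw [hS, hE]
  omega
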